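/- Let G be a finite abelian p-group, G ≅ ℤ/(p^(n₁)) × … × ℤ/(p^(n_k)). Then the associated graded algebra of 𝔽_pG with respect to the augmentation ideal filtration is isomorphic as an algebra to 𝔽_p[x₁,…,x_k]/(x₁^(p^(n₁)),…,x_k^(p^(n_k))). -/

import Mathlib

/-! STATEMENT 9: for a finite abelian p-group `G ≅ ℤ/(p^(n₁)) × … × ℤ/(p^(n_k))`, the
associated graded algebra of the group algebra `𝔽_pG` with respect to the augmentation
ideal filtration is isomorphic as an `𝔽_p`-algebra to
`𝔽_p[x₁,…,x_k]/(x₁^(p^(n₁)),…,x_k^(p^(n_k)))`.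

The associated graded algebra `⊕_d I^d/I^(d+1)` is encoded by its graded pieces
`I^d/I^(d+1)` together with the multiplication induced by that of `𝔽_pG` on
representatives; an algebra isomorphism is a family of `𝔽_p`-linear bijections from
the graded pieces of the (monomial-graded) truncated polynomial algebra which is
unital and compatible with multiplication of representatives. -/

open scoped DirectSum

/-- the augmentation ideal of `𝔽_pG`. -/
noncomputable def augIdeal (p : ℕ) (G : Type*) [CommGroup G] :
    Ideal (MonoidAlgebra (ZMod p) G) :=
  RingHom.ker (MonoidAlgebra.lift (ZMod p) (ZMod p) G 1)

/-- the `d`-th power `I^d` of the augmentation ideal, as an `𝔽_p`-submodule. -/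
noncomputable def augPow (p : ℕ) (G : Type*) [CommGroup G] (d : ℕ) :
    Submodule (ZMod p) (MonoidAlgebra (ZMod p) G) :=
  Submodule.restrictScalars (ZMod p) (augIdeal p G ^ d)

/-- the graded piece `I^d/I^(d+1)` of the associated graded algebra `E⁰(𝔽_pG)`. -/
abbrev grPiece (p : ℕ) (G : Type*) [CommGroup G] (d : ℕ) :=
  augPow p G d ⧸ (Submodule.comap (augPow p G d).subtype (augPow p G (d + 1)))

/-- the class in `I^d/I^(d+1)` of an element `u ∈ I^d`. -/
noncomputable def grMk (p : ℕ) (G : Type*) [CommGroup G] (d : ℕ)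
    (u : MonoidAlgebra (ZMod p) G) (hu : u ∈ augPow p G d) : grPiece p G d :=
  Submodule.Quotient.mk ⟨u, hu⟩

/-- the truncated polynomial algebra `𝔽_p[x₁,…,x_k]/(x_i^(p^(n_i)))`. -/
abbrev TruncMvPoly (p k : ℕ) (n : Fin k → ℕ) :=
  MvPolynomial (Fin k) (ZMod p) ⧸
    Ideal.span {q : MvPolynomial (Fin k) (ZMod p) | ∃ i, q = MvPolynomial.X i ^ p ^ n i}

/-- the degree-`d` component of the truncated polynomial algebra, spanned by the
monomials of total degree `d`. -/
noncomputable def truncPiece (p k : ℕ) (n : Fin k → ℕ) (d : ℕ) :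
    Submodule (ZMod p) (TruncMvPoly p k n) :=
  Submodule.span (ZMod p) {q : TruncMvPoly p k n | ∃ a : Fin k → ℕ, (∑ i, a i) = d ∧
    q = ∏ i, (Ideal.Quotient.mk _ (MvPolynomial.X i)) ^ a i}


open MvPolynomial

section Aux

variable (p k : ℕ) (n : Fin k → ℕ) (G : Type) [CommGroup G]

noncomputable abbrev agJ : Ideal (MvPolynomial (Fin k) (ZMod p)) :=
  Ideal.span {q : MvPolynomial (Fin k) (ZMod p) | ∃ i, q = MvPolynomial.X i ^ p ^ n i}

variable (eG : G ≃* ((i : Fin k) → Multiplicative (ZMod (p ^ n i))))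

noncomputable def aggen (i : Fin k) : G :=
  eG.symm (Pi.mulSingle i (Multiplicative.ofAdd (1 : ZMod (p ^ n i))))

noncomputable def agPsi : MvPolynomial (Fin k) (ZMod p) →ₐ[ZMod p] MonoidAlgebra (ZMod p) G :=
  MvPolynomial.aeval fun i => MonoidAlgebra.of (ZMod p) G (aggen p k n G eG i) - 1

lemma aggen_pow (i : Fin k) : aggen p k n G eG i ^ p ^ n i = 1 := by
  apply eG.injective
  rw [map_pow, map_one, aggen, MulEquiv.apply_symm_apply, ← Pi.mulSingle_pow]
  have h1 : (Multiplicative.ofAdd (1 : ZMod (p ^ n i))) ^ (p ^ n i) = 1 := by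
    rw [← ofAdd_nsmul]
    simp [nsmul_eq_mul]
  simp [MonoidHom.mulSingle_apply, h1]

lemma agPsi_zero_on_J (hp : p.Prime) : ∀ a ∈ agJ p k n, agPsi p k n G eG a = 0 := by
  intro a ha
  haveI := Fact.mk hp
  haveI : CharP (MonoidAlgebra (ZMod p) G) p :=
    charP_of_injective_algebraMap' (ZMod p) p
  refine (Ideal.span_le.mpr ?_ ha : a ∈ RingHom.ker (agPsi p k n G eG))
  rintro q ⟨i, rfl⟩
  rw [SetLike.mem_coe, RingHom.mem_ker, map_pow, agPsi, aeval_X, sub_pow_char_pow, one_pow,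
    ← map_pow, aggen_pow, map_one, sub_self]

noncomputable def agPsibar (hp : p.Prime) : TruncMvPoly p k n →ₐ[ZMod p] MonoidAlgebra (ZMod p) G :=
  Ideal.Quotient.liftₐ (agJ p k n) (agPsi p k n G eG) (agPsi_zero_on_J p k n G eG hp)

lemma agPsibar_mk (hp : p.Prime) (P : MvPolynomial (Fin k) (ZMod p)) :
    agPsibar p k n G eG hp (Ideal.Quotient.mk (agJ p k n) P) = agPsi p k n G eG P := by
  rw [agPsibar, Ideal.Quotient.liftₐ_apply]
  rfl

noncomputable def aguX (i : Fin k) : TruncMvPoly p k n :=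
  Ideal.Quotient.mk (agJ p k n) (1 + MvPolynomial.X i)

lemma agJ_ne_top (hp : p.Prime) : agJ p k n ≠ ⊤ := by
  intro h
  have h1 : (1 : MvPolynomial (Fin k) (ZMod p)) ∈ agJ p k n := h ▸ Submodule.mem_top
  have h2 : agJ p k n ≤ RingHom.ker (constantCoeff (σ := Fin k) (R := ZMod p)) := by
    refine Ideal.span_le.mpr ?_
    rintro q ⟨i, rfl⟩
    rw [SetLike.mem_coe, RingHom.mem_ker, map_pow, constantCoeff_X,
      zero_pow (pow_ne_zero _ hp.ne_zero)]
  haveI := Fact.mk hp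
  have := h2 h1
  rw [RingHom.mem_ker, map_one] at this
  exact one_ne_zero this

lemma aguX_pow (hp : p.Prime) (i : Fin k) : aguX p k n i ^ p ^ n i = 1 := by
  haveI := Fact.mk hp
  haveI : CharP (MvPolynomial (Fin k) (ZMod p)) p :=
    charP_of_injective_algebraMap' (ZMod p) p
  have h0 : (Ideal.Quotient.mk (agJ p k n)) (MvPolynomial.X i ^ p ^ n i) = 0 :=
    Ideal.Quotient.eq_zero_iff_mem.mpr (Ideal.subset_span ⟨i, rfl⟩)
  rw [aguX, ← map_pow, add_pow_char_pow, one_pow, map_add, map_one, h0, add_zero]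

end Aux
section Aux2

open MvPolynomial

variable (p k : ℕ) (n : Fin k → ℕ) (G : Type) [CommGroup G]
variable (eG : G ≃* ((i : Fin k) → Multiplicative (ZMod (p ^ n i))))

noncomputable def agtheta (hp : p.Prime) : G →* TruncMvPoly p k n where
  toFun g := ∏ i, aguX p k n i ^ (Multiplicative.toAdd (eG g i)).val
  map_one' := by
    refine Finset.prod_eq_one fun i _ => ?_
    haveI : NeZero (p ^ n i) := ⟨pow_ne_zero _ hp.ne_zero⟩
    rw [map_one eG, Pi.one_apply, toAdd_one, ZMod.val_zero, pow_zero]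
  map_mul' a b := by
    show (∏ i, aguX p k n i ^ (Multiplicative.toAdd (eG (a * b) i)).val) =
      (∏ i, aguX p k n i ^ (Multiplicative.toAdd (eG a i)).val) *
        ∏ i, aguX p k n i ^ (Multiplicative.toAdd (eG b i)).val
    rw [← Finset.prod_mul_distrib]
    refine Finset.prod_congr rfl fun i _ => ?_
    haveI : NeZero (p ^ n i) := ⟨pow_ne_zero _ hp.ne_zero⟩
    rw [map_mul eG, Pi.mul_apply, toAdd_mul, ZMod.val_add,
      ← pow_eq_pow_mod _ (aguX_pow p k n hp i), pow_add]

noncomputable def agLambda (hp : p.Prime) :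
    MonoidAlgebra (ZMod p) G →ₐ[ZMod p] TruncMvPoly p k n :=
  MonoidAlgebra.lift (ZMod p) (TruncMvPoly p k n) G (agtheta p k n G eG hp)

lemma agtheta_gen (hp : p.Prime) (hn : ∀ i, 1 ≤ n i) (i : Fin k) :
    agtheta p k n G eG hp (aggen p k n G eG i) = aguX p k n i := by
  have key : ∀ j : Fin k,
      aguX p k n j ^ (Multiplicative.toAdd (eG (aggen p k n G eG i) j)).val =
        if j = i then aguX p k n i else 1 := by
    intro j
    rw [aggen, MulEquiv.apply_symm_apply]
    by_cases hj : j = i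
    · subst hj
      haveI : Fact (1 < p ^ n j) :=
        ⟨Nat.one_lt_pow (by have := hn j; omega) hp.one_lt⟩
      rw [if_pos rfl, Pi.mulSingle_eq_same, toAdd_ofAdd, ZMod.val_one, pow_one]
    · haveI : NeZero (p ^ n j) := ⟨pow_ne_zero _ hp.ne_zero⟩
      rw [if_neg hj, Pi.mulSingle_eq_of_ne hj, toAdd_one, ZMod.val_zero, pow_zero]
  show (∏ j, aguX p k n j ^ (Multiplicative.toAdd (eG (aggen p k n G eG i) j)).val) = _
  rw [Finset.prod_congr rfl fun j _ => key j]
  simp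

lemma agLambda_Psibar (hp : p.Prime) (hn : ∀ i, 1 ≤ n i) (z : TruncMvPoly p k n) :
    agLambda p k n G eG hp (agPsibar p k n G eG hp z) = z := by
  have h : (agLambda p k n G eG hp).comp (agPsibar p k n G eG hp) =
      AlgHom.id (ZMod p) (TruncMvPoly p k n) := by
    apply Ideal.Quotient.algHom_ext
    apply MvPolynomial.algHom_ext
    intro i
    rw [AlgHom.comp_apply, AlgHom.comp_apply, Ideal.Quotient.mkₐ_eq_mk, agPsibar_mk,
      AlgHom.comp_apply, Ideal.Quotient.mkₐ_eq_mk, AlgHom.id_apply]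
    rw [agPsi, aeval_X, map_sub, map_one]
    rw [show (agLambda p k n G eG hp) (MonoidAlgebra.of (ZMod p) G (aggen p k n G eG i)) =
        agtheta p k n G eG hp (aggen p k n G eG i) from MonoidAlgebra.lift_of _ _]
    rw [agtheta_gen p k n G eG hp hn i, aguX, map_add, map_one, add_sub_cancel_left]
  exact DFunLike.congr_fun h z

lemma agPsibar_uX (hp : p.Prime) (i : Fin k) :
    agPsibar p k n G eG hp (aguX p k n i) =
      MonoidAlgebra.of (ZMod p) G (aggen p k n G eG i) := by
  rw [aguX, agPsibar_mk, agPsi, map_add, map_one, aeval_X, add_sub_cancel]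

lemma aggen_prod (hp : p.Prime) (g : G) :
    (∏ j, aggen p k n G eG j ^ (Multiplicative.toAdd (eG g j)).val) = g := by
  apply eG.injective
  rw [map_prod]
  have h : ∀ j : Fin k, eG (aggen p k n G eG j ^ (Multiplicative.toAdd (eG g j)).val) =
      Pi.mulSingle j (eG g j) := by
    intro j
    haveI : NeZero (p ^ n j) := ⟨pow_ne_zero _ hp.ne_zero⟩
    rw [map_pow, aggen, MulEquiv.apply_symm_apply, ← Pi.mulSingle_pow]
    rw [← ofAdd_nsmul, nsmul_eq_mul, mul_one, ZMod.natCast_rightInverse _, ofAdd_toAdd]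
  rw [Finset.prod_congr rfl fun j _ => h j, Finset.univ_prod_mulSingle]

lemma agPsibar_Lambda (hp : p.Prime) (u : MonoidAlgebra (ZMod p) G) :
    agPsibar p k n G eG hp (agLambda p k n G eG hp u) = u := by
  have h : (agPsibar p k n G eG hp).comp (agLambda p k n G eG hp) =
      AlgHom.id (ZMod p) (MonoidAlgebra (ZMod p) G) := by
    apply MonoidAlgebra.algHom_ext
    intro g
    rw [AlgHom.comp_apply, AlgHom.id_apply, ← MonoidAlgebra.of_apply]
    rw [show (agLambda p k n G eG hp) (MonoidAlgebra.of (ZMod p) G g) =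
        agtheta p k n G eG hp g from MonoidAlgebra.lift_of _ _]
    show agPsibar p k n G eG hp (∏ j, aguX p k n j ^ (Multiplicative.toAdd (eG g j)).val) = _
    rw [map_prod]
    have : ∀ j : Fin k, agPsibar p k n G eG hp
        (aguX p k n j ^ (Multiplicative.toAdd (eG g j)).val) =
        MonoidAlgebra.of (ZMod p) G (aggen p k n G eG j ^ (Multiplicative.toAdd (eG g j)).val) := by
      intro j; rw [map_pow, agPsibar_uX p k n G eG hp j, map_pow]
    rw [Finset.prod_congr rfl fun j _ => this j, ← map_prod, aggen_prod p k n G eG hp g]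
    exact Subsingleton.elim _ _
  exact DFunLike.congr_fun h u

lemma agPsibar_bijective (hp : p.Prime) (hn : ∀ i, 1 ≤ n i) :
    Function.Bijective (agPsibar p k n G eG hp) :=
  ⟨fun a b hab => by
      rw [← agLambda_Psibar p k n G eG hp hn a, hab, agLambda_Psibar p k n G eG hp hn b],
   fun u => ⟨agLambda p k n G eG hp u, agPsibar_Lambda p k n G eG hp u⟩⟩

end Aux2
section Aux3

open MvPolynomial

variable (p k : ℕ) (n : Fin k → ℕ) (G : Type) [CommGroup G]
variable (eG : G ≃* ((i : Fin k) → Multiplicative (ZMod (p ^ n i))))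

/-- span of monomials of total degree at least `d`. -/
noncomputable def agF (d : ℕ) : Submodule (ZMod p) (TruncMvPoly p k n) :=
  Submodule.span (ZMod p) {q : TruncMvPoly p k n | ∃ a : Fin k → ℕ, d ≤ ∑ i, a i ∧
    q = ∏ i, (Ideal.Quotient.mk (agJ p k n) (MvPolynomial.X i)) ^ a i}

lemma agF_mul {d e : ℕ} {x y : TruncMvPoly p k n}
    (hx : x ∈ agF p k n d) (hy : y ∈ agF p k n e) : x * y ∈ agF p k n (d + e) := by
  have h := Submodule.mul_mem_mul hx hy
  rw [agF, agF, Submodule.span_mul_span] at h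
  refine Submodule.span_le.mpr ?_ h
  rintro z ⟨z1, ⟨a, ha, rfl⟩, z2, ⟨b, hb, rfl⟩, rfl⟩
  refine Submodule.subset_span ⟨fun i => a i + b i, ?_, ?_⟩
  · rw [Finset.sum_add_distrib]; exact add_le_add ha hb
  · show (∏ i, (Ideal.Quotient.mk (agJ p k n) (MvPolynomial.X i)) ^ a i) *
        (∏ i, (Ideal.Quotient.mk (agJ p k n) (MvPolynomial.X i)) ^ b i) =
      ∏ i, (Ideal.Quotient.mk (agJ p k n) (MvPolynomial.X i)) ^ (a i + b i)
    rw [← Finset.prod_mul_distrib]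
    exact Finset.prod_congr rfl fun i _ => (pow_add _ _ _).symm

lemma agmk_monomial_one (v : Fin k →₀ ℕ) :
    Ideal.Quotient.mk (agJ p k n) (monomial v 1) =
      ∏ i, (Ideal.Quotient.mk (agJ p k n) (MvPolynomial.X i)) ^ v i := by
  have h1 : (monomial v (1 : ZMod p)) = ∏ i, MvPolynomial.X i ^ v i := by
    rw [monomial_eq, C_1, one_mul, Finsupp.prod]
    exact Finset.prod_subset (Finset.subset_univ _)
      (fun i _ hi => by rw [Finsupp.notMem_support_iff.mp hi, pow_zero])
  rw [h1, map_prod]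
  exact Finset.prod_congr rfl fun i _ => map_pow _ _ _

lemma agmk_monomial_mem (v : Fin k →₀ ℕ) (c : ZMod p) {d : ℕ} (hd : d ≤ ∑ i, v i) :
    Ideal.Quotient.mk (agJ p k n) (monomial v c) ∈ agF p k n d := by
  have h1 : Ideal.Quotient.mk (agJ p k n) (monomial v 1) ∈ agF p k n d :=
    Submodule.subset_span ⟨fun i => v i, hd, by rw [agmk_monomial_one p k n v]⟩
  have h2 : (monomial v c : MvPolynomial (Fin k) (ZMod p)) = c • monomial v 1 := by
    rw [smul_monomial, smul_eq_mul, mul_one]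
  rw [h2, ← Ideal.Quotient.mkₐ_eq_mk (ZMod p), map_smul]
  exact Submodule.smul_mem _ c (by rw [Ideal.Quotient.mkₐ_eq_mk]; exact h1)

lemma agmk_mem_F0 (P : MvPolynomial (Fin k) (ZMod p)) :
    Ideal.Quotient.mk (agJ p k n) P ∈ agF p k n 0 := by
  rw [P.as_sum, map_sum]
  exact Submodule.sum_mem _ fun v _ => agmk_monomial_mem p k n v _ (Nat.zero_le _)

lemma agmk_mem_F1 (P : MvPolynomial (Fin k) (ZMod p)) (hP : constantCoeff P = 0) :
    Ideal.Quotient.mk (agJ p k n) P ∈ agF p k n 1 := by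
  rw [P.as_sum, map_sum]
  refine Submodule.sum_mem _ fun v hv => agmk_monomial_mem p k n v _ ?_
  have hv0 : v ≠ 0 := by
    rintro rfl
    refine (MvPolynomial.mem_support_iff.mp hv) ?_
    rw [show (coeff 0 P : ZMod p) = constantCoeff P from rfl, hP]
  by_contra h
  push_neg at h
  refine hv0 (Finsupp.ext fun i => ?_)
  have := (Finset.sum_eq_zero_iff).mp (by omega : (∑ i, v i) = 0) i (Finset.mem_univ i)
  simpa using this

lemma prod_pow_mem_ideal {R : Type*} [CommRing R] (I : Ideal R) (y : Fin k → R)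
    (hy : ∀ i, y i ∈ I) (a : Fin k → ℕ) :
    (∏ i, y i ^ a i) ∈ I ^ (∑ i, a i) := by
  classical
  have : ∀ s : Finset (Fin k), (∏ i ∈ s, y i ^ a i) ∈ I ^ (∑ i ∈ s, a i) := by
    intro s
    induction s using Finset.induction_on with
    | empty => rw [Finset.prod_empty, Finset.sum_empty, pow_zero, Ideal.one_eq_top]; trivial
    | @insert j s hj ih =>
        rw [Finset.prod_insert hj, Finset.sum_insert hj, pow_add]
        exact Ideal.mul_mem_mul (Ideal.pow_mem_pow (hy _) _) ih
  exact this Finset.univ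

lemma of_sub_one_mem (g : G) :
    MonoidAlgebra.of (ZMod p) G g - 1 ∈ augIdeal p G := by
  refine RingHom.mem_ker.mpr ?_
  rw [map_sub (MonoidAlgebra.lift (ZMod p) (ZMod p) G 1),
    map_one (MonoidAlgebra.lift (ZMod p) (ZMod p) G 1),
    MonoidAlgebra.lift_of (R := ZMod p) (1 : G →* ZMod p) g]
  simp

end Aux3
section Aux4

open MvPolynomial

variable (p k : ℕ) (n : Fin k → ℕ) (G : Type) [CommGroup G]
variable (eG : G ≃* ((i : Fin k) → Multiplicative (ZMod (p ^ n i))))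

lemma agF_map_le (hp : p.Prime) (d : ℕ) :
    Submodule.map (agPsibar p k n G eG hp).toLinearMap (agF p k n d) ≤ augPow p G d := by
  rw [agF]
  refine (Submodule.map_span_le _ _ _).mpr ?_
  rintro q ⟨a, hd, rfl⟩
  show agPsibar p k n G eG hp (∏ i, (Ideal.Quotient.mk (agJ p k n) (MvPolynomial.X i)) ^ a i)
      ∈ augPow p G d
  rw [map_prod]
  have hfac : ∀ i : Fin k, agPsibar p k n G eG hp
      ((Ideal.Quotient.mk (agJ p k n) (MvPolynomial.X i)) ^ a i) =
      (MonoidAlgebra.of (ZMod p) G (aggen p k n G eG i) - 1) ^ a i := by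
    intro i
    rw [map_pow, agPsibar_mk, agPsi, aeval_X]
  rw [Finset.prod_congr rfl fun i _ => hfac i]
  rw [augPow, Submodule.restrictScalars_mem]
  refine Ideal.pow_le_pow_right hd ?_
  exact prod_pow_mem_ideal k (augIdeal p G) _ (fun i => of_sub_one_mem p G _) a

lemma eps_Psi (hp : p.Prime) (P : MvPolynomial (Fin k) (ZMod p)) :
    (MonoidAlgebra.lift (ZMod p) (ZMod p) G 1) (agPsi p k n G eG P) = constantCoeff P := by
  have h : ((MonoidAlgebra.lift (ZMod p) (ZMod p) G 1).comp (agPsi p k n G eG)) =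
      MvPolynomial.aeval (fun _ : Fin k => (0 : ZMod p)) := by
    apply MvPolynomial.algHom_ext
    intro i
    rw [AlgHom.comp_apply, agPsi, aeval_X, aeval_X]
    rw [map_sub (MonoidAlgebra.lift (ZMod p) (ZMod p) G 1),
      map_one (MonoidAlgebra.lift (ZMod p) (ZMod p) G 1),
      MonoidAlgebra.lift_of (R := ZMod p) (1 : G →* ZMod p)]
    simp
  have h2 := DFunLike.congr_fun h P
  rw [AlgHom.comp_apply] at h2
  rw [h2, aeval_zero']
  simp

lemma aug_mem_map (hp : p.Prime) (hn : ∀ i, 1 ≤ n i) (v : MonoidAlgebra (ZMod p) G)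
    (hv : v ∈ augIdeal p G) :
    ∃ z ∈ agF p k n 1, agPsibar p k n G eG hp z = v := by
  obtain ⟨Q, hQ⟩ := Ideal.Quotient.mk_surjective (I := agJ p k n) (agLambda p k n G eG hp v)
  have hQv : agPsibar p k n G eG hp (Ideal.Quotient.mk (agJ p k n) Q) = v := by
    rw [hQ, agPsibar_Lambda]
  refine ⟨_, agmk_mem_F1 p k n Q ?_, hQv⟩
  have h1 : (MonoidAlgebra.lift (ZMod p) (ZMod p) G 1) v = 0 := RingHom.mem_ker.mp hv
  have h2 := eps_Psi p k n G eG hp Q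
  rw [← agPsibar_mk p k n G eG hp Q] at h2
  rw [hQv, h1] at h2
  exact h2.symm

lemma agF_map_eq (hp : p.Prime) (hn : ∀ i, 1 ≤ n i) (d : ℕ) :
    Submodule.map (agPsibar p k n G eG hp).toLinearMap (agF p k n d) = augPow p G d := by
  refine le_antisymm (agF_map_le p k n G eG hp d) ?_
  induction d with
  | zero =>
      intro u _
      obtain ⟨Q, hQ⟩ := Ideal.Quotient.mk_surjective (I := agJ p k n) (agLambda p k n G eG hp u)
      refine Submodule.mem_map.mpr ⟨Ideal.Quotient.mk (agJ p k n) Q, agmk_mem_F0 p k n Q, ?_⟩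
      show agPsibar p k n G eG hp (Ideal.Quotient.mk (agJ p k n) Q) = u
      rw [hQ, agPsibar_Lambda]
  | succ d ih =>
      intro u hu
      rw [augPow, Submodule.restrictScalars_mem, pow_succ] at hu
      refine Submodule.mul_induction_on hu ?_ ?_
      · intro m hm w hw
        have hm' : m ∈ augPow p G d := by rw [augPow, Submodule.restrictScalars_mem]; exact hm
        obtain ⟨z1, hz1, hz1m⟩ := Submodule.mem_map.mp (ih hm')
        obtain ⟨z2, hz2, hz2w⟩ := aug_mem_map p k n G eG hp hn w hw
        refine Submodule.mem_map.mpr ⟨z1 * z2, agF_mul p k n hz1 hz2, ?_⟩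
        show agPsibar p k n G eG hp (z1 * z2) = m * w
        rw [map_mul]
        show agPsibar p k n G eG hp z1 * agPsibar p k n G eG hp z2 = m * w
        rw [hz2w]
        show (agPsibar p k n G eG hp).toLinearMap z1 * w = m * w
        rw [hz1m]
      · intro x y hx hy
        exact Submodule.add_mem _ hx hy

lemma truncPiece_le_agF (d : ℕ) : truncPiece p k n d ≤ agF p k n d := by
  rw [truncPiece, agF]
  exact Submodule.span_mono (fun q ⟨a, ha, hq⟩ => ⟨a, le_of_eq ha.symm, hq⟩)

lemma agF_le_sup (d : ℕ) : agF p k n d ≤ truncPiece p k n d ⊔ agF p k n (d + 1) := by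
  rw [agF]
  refine Submodule.span_le.mpr ?_
  rintro q ⟨a, hd, rfl⟩
  rcases eq_or_lt_of_le hd with h | h
  · exact Submodule.mem_sup_left (Submodule.subset_span ⟨a, h.symm, rfl⟩)
  · exact Submodule.mem_sup_right (Submodule.subset_span ⟨a, h, rfl⟩)

end Aux4
section Aux5

open MvPolynomial

variable (p k : ℕ) (n : Fin k → ℕ)

lemma trunc_exists_lift (d : ℕ) {x : TruncMvPoly p k n} (hx : x ∈ truncPiece p k n d) :
    ∃ P ∈ homogeneousSubmodule (Fin k) (ZMod p) d, Ideal.Quotient.mk (agJ p k n) P = x := by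
  refine Submodule.span_induction ?_ ?_ ?_ ?_ hx
  · rintro q ⟨a, ha, rfl⟩
    refine ⟨∏ i, MvPolynomial.X i ^ a i, ?_, ?_⟩
    · rw [mem_homogeneousSubmodule, ← ha]
      exact IsHomogeneous.prod _ _ _ fun i _ => isHomogeneous_X_pow i (a i)
    · rw [map_prod]
      exact Finset.prod_congr rfl fun i _ => map_pow _ _ _
  · exact ⟨0, Submodule.zero_mem _, map_zero _⟩
  · rintro x y _ _ ⟨P, hP, hPx⟩ ⟨Q, hQ, hQy⟩
    exact ⟨P + Q, Submodule.add_mem _ hP hQ, by rw [map_add, hPx, hQy]⟩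
  · rintro c x _ ⟨P, hP, hPx⟩
    refine ⟨c • P, Submodule.smul_mem _ c hP, ?_⟩
    rw [← Ideal.Quotient.mkₐ_eq_mk (ZMod p), map_smul, Ideal.Quotient.mkₐ_eq_mk, hPx]

lemma F_succ_component (d : ℕ) {x : TruncMvPoly p k n} (hx : x ∈ agF p k n (d + 1)) :
    ∃ Q, Ideal.Quotient.mk (agJ p k n) Q = x ∧ homogeneousComponent d Q = 0 := by
  refine Submodule.span_induction ?_ ?_ ?_ ?_ hx
  · rintro q ⟨a, ha, rfl⟩
    refine ⟨∏ i, MvPolynomial.X i ^ a i, ?_, ?_⟩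
    · rw [map_prod]
      exact Finset.prod_congr rfl fun i _ => map_pow _ _ _
    · have hmem : (∏ i, MvPolynomial.X i ^ a i : MvPolynomial (Fin k) (ZMod p)) ∈
          homogeneousSubmodule (Fin k) (ZMod p) (∑ i, a i) := by
        rw [mem_homogeneousSubmodule _ _]
        exact IsHomogeneous.prod _ _ _ fun i _ => isHomogeneous_X_pow i (a i)
      rw [homogeneousComponent_of_mem hmem, if_neg (by omega)]
  · exact ⟨0, map_zero _, map_zero _⟩
  · rintro x y _ _ ⟨P, hPx, hP0⟩ ⟨Q, hQy, hQ0⟩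
    exact ⟨P + Q, by rw [map_add, hPx, hQy], by rw [map_add, hP0, hQ0, add_zero]⟩
  · rintro c x _ ⟨P, hPx, hP0⟩
    refine ⟨c • P, ?_, by rw [map_smul, hP0, smul_zero]⟩
    rw [← Ideal.Quotient.mkₐ_eq_mk (ZMod p), map_smul, Ideal.Quotient.mkₐ_eq_mk, hPx]

lemma J_component (d : ℕ) {R : MvPolynomial (Fin k) (ZMod p)} (hR : R ∈ agJ p k n) :
    homogeneousComponent d R ∈ agJ p k n := by
  have hset : {q : MvPolynomial (Fin k) (ZMod p) | ∃ i, q = MvPolynomial.X i ^ p ^ n i} =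
      Set.range (fun i : Fin k => (MvPolynomial.X i : MvPolynomial (Fin k) (ZMod p)) ^ p ^ n i) := by
    ext q
    constructor
    · rintro ⟨i, rfl⟩; exact ⟨i, rfl⟩
    · rintro ⟨i, rfl⟩; exact ⟨i, rfl⟩
  have hJ : agJ p k n = Ideal.span (Set.range
      (fun i : Fin k => (MvPolynomial.X i : MvPolynomial (Fin k) (ZMod p)) ^ p ^ n i)) := by
    rw [agJ, hset]
  rw [hJ] at hR ⊢
  obtain ⟨c, hc⟩ := Ideal.mem_span_range_iff_exists_fun.mp hR
  rw [← hc, map_sum]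
  refine Ideal.sum_mem _ fun i _ => ?_
  have hXN : (MvPolynomial.X i : MvPolynomial (Fin k) (ZMod p)) ^ p ^ n i ∈
      Ideal.span (Set.range
        (fun i : Fin k => (MvPolynomial.X i : MvPolynomial (Fin k) (ZMod p)) ^ p ^ n i)) :=
    Ideal.subset_span ⟨i, rfl⟩
  rw [← sum_homogeneousComponent (c i), Finset.sum_mul, map_sum]
  refine Ideal.sum_mem _ fun e _ => ?_
  have hmem : homogeneousComponent e (c i) * MvPolynomial.X i ^ p ^ n i ∈
      homogeneousSubmodule (Fin k) (ZMod p) (e + p ^ n i) :=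
    (mem_homogeneousSubmodule _ _).mpr
      ((homogeneousComponent_isHomogeneous e (c i)).mul (isHomogeneous_X_pow i (p ^ n i)))
  rw [homogeneousComponent_of_mem hmem]
  split
  · exact Ideal.mul_mem_left _ _ hXN
  · exact Submodule.zero_mem _

lemma trunc_inf_F (d : ℕ) : truncPiece p k n d ⊓ agF p k n (d + 1) = ⊥ := by
  rw [eq_bot_iff]
  rintro x ⟨hx1, hx2⟩
  obtain ⟨P, hP, hPx⟩ := trunc_exists_lift p k n d hx1
  obtain ⟨Q, hQx, hQ0⟩ := F_succ_component p k n d hx2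
  have hPQ : P - Q ∈ agJ p k n := by
    rw [← Ideal.Quotient.eq_zero_iff_mem, map_sub, hPx, hQx, sub_self]
  have h := J_component p k n d hPQ
  rw [map_sub, hQ0, sub_zero, homogeneousComponent_of_mem hP, if_pos rfl] at h
  rw [Submodule.mem_bot, ← hPx]
  exact Ideal.Quotient.eq_zero_iff_mem.mpr h

end Aux5
theorem associatedGraded_groupAlgebra_abelian (p k : ℕ) (n : Fin k → ℕ) (hp : p.Prime)
    (hn : ∀ i, 1 ≤ n i) (G : Type) [CommGroup G]
    (eG : G ≃* ((i : Fin k) → Multiplicative (ZMod (p ^ n i)))) :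
    ∃ φ : (d : ℕ) → truncPiece p k n d →ₗ[ZMod p] grPiece p G d,
      (∀ d, Function.Bijective (φ d)) ∧
      -- unital
      (∀ (h1 : (1 : TruncMvPoly p k n) ∈ truncPiece p k n 0)
         (h1' : (1 : MonoidAlgebra (ZMod p) G) ∈ augPow p G 0),
        φ 0 ⟨1, h1⟩ = grMk p G 0 1 h1') ∧
      -- compatible with multiplication of representatives
      (∀ (d e : ℕ) (x : truncPiece p k n d) (y : truncPiece p k n e)
         (hxy : (x : TruncMvPoly p k n) * (y : TruncMvPoly p k n) ∈ truncPiece p k n (d + e))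
         (u v : MonoidAlgebra (ZMod p) G)
         (hu : u ∈ augPow p G d) (hv : v ∈ augPow p G e)
         (huv : u * v ∈ augPow p G (d + e)),
        φ d x = grMk p G d u hu → φ e y = grMk p G e v hv →
        φ (d + e) ⟨(x : TruncMvPoly p k n) * (y : TruncMvPoly p k n), hxy⟩ =
          grMk p G (d + e) (u * v) huv) := by
  have hbij := agPsibar_bijective p k n G eG hp hn
  set Ψ := agPsibar p k n G eG hp with hΨdef
  have hmemF : ∀ (d : ℕ) (x : truncPiece p k n d),
      Ψ (x : TruncMvPoly p k n) ∈ augPow p G d := fun d x =>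
    agF_map_le p k n G eG hp d (Submodule.mem_map_of_mem (truncPiece_le_agF p k n d x.2))
  let φ : (d : ℕ) → truncPiece p k n d →ₗ[ZMod p] grPiece p G d := fun d =>
    (Submodule.comap (augPow p G d).subtype (augPow p G (d + 1))).mkQ ∘ₗ
      LinearMap.codRestrict (augPow p G d) (Ψ.toLinearMap ∘ₗ (truncPiece p k n d).subtype)
        (fun x => hmemF d x)
  have hφ : ∀ (d : ℕ) (x : truncPiece p k n d),
      φ d x = Submodule.Quotient.mk ⟨Ψ (x : TruncMvPoly p k n), hmemF d x⟩ := fun d x => rfl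
  have hquot : ∀ (d : ℕ) (a b : augPow p G d),
      (Submodule.Quotient.mk a : grPiece p G d) = Submodule.Quotient.mk b ↔
        (a : MonoidAlgebra (ZMod p) G) - b ∈ augPow p G (d + 1) := by
    intro d a b
    rw [Submodule.Quotient.eq]
    simp [Submodule.mem_comap]
  refine ⟨φ, ?_, ?_, ?_⟩
  · intro d
    constructor
    · refine LinearMap.ker_eq_bot.mp (LinearMap.ker_eq_bot'.mpr ?_)
      intro x hx0
      rw [hφ d x, Submodule.Quotient.mk_eq_zero] at hx0
      have hx1 : Ψ (x : TruncMvPoly p k n) ∈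
          Submodule.map Ψ.toLinearMap (agF p k n (d + 1)) := by
        rw [agF_map_eq p k n G eG hp hn (d + 1)]; exact hx0
      obtain ⟨w, hw, hwx⟩ := Submodule.mem_map.mp hx1
      have hwx' : w = (x : TruncMvPoly p k n) := hbij.1 hwx
      have hmem2 : (x : TruncMvPoly p k n) ∈ truncPiece p k n d ⊓ agF p k n (d + 1) :=
        ⟨x.2, hwx' ▸ hw⟩
      rw [trunc_inf_F] at hmem2
      exact Subtype.ext (by simpa using hmem2)
    · intro c
      obtain ⟨s, rfl⟩ := Submodule.Quotient.mk_surjective _ c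
      have hs : (s : MonoidAlgebra (ZMod p) G) ∈
          Submodule.map Ψ.toLinearMap (agF p k n d) := by
        rw [agF_map_eq p k n G eG hp hn d]; exact s.2
      obtain ⟨w, hwF, hws⟩ := Submodule.mem_map.mp hs
      obtain ⟨y, hy, z, hz, hyz⟩ := Submodule.mem_sup.mp (agF_le_sup p k n d hwF)
      refine ⟨⟨y, hy⟩, ?_⟩
      rw [hφ, hquot]
      have hzw : Ψ y - (s : MonoidAlgebra (ZMod p) G) = -(Ψ z) := by
        have h1 : Ψ w = s := hws
        have h2 : Ψ y + Ψ z = Ψ w := by rw [← map_add, hyz]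
        rw [← h1, ← h2]; ring
      rw [hzw]
      exact Submodule.neg_mem _
        (agF_map_le p k n G eG hp (d + 1) (Submodule.mem_map_of_mem hz))
  · intro h1 h1'
    rw [hφ, show grMk p G 0 1 h1' =
      (Submodule.Quotient.mk ⟨(1 : MonoidAlgebra (ZMod p) G), h1'⟩ : grPiece p G 0) from rfl]
    exact congrArg _ (Subtype.ext (by simpa using map_one Ψ))
  · intro d e x y hxy u v hu hv huv hx hy
    rw [hφ] at hx hy
    rw [show grMk p G d u hu = Submodule.Quotient.mk ⟨u, hu⟩ from rfl, hquot] at hx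
    rw [show grMk p G e v hv = Submodule.Quotient.mk ⟨v, hv⟩ from rfl, hquot] at hy
    rw [hφ, show grMk p G (d + e) (u * v) huv = Submodule.Quotient.mk ⟨u * v, huv⟩ from rfl,
      hquot]
    show Ψ ((x : TruncMvPoly p k n) * (y : TruncMvPoly p k n)) - u * v ∈ augPow p G (d + e + 1)
    rw [map_mul]
    have hsplit : Ψ (x : TruncMvPoly p k n) * Ψ (y : TruncMvPoly p k n) - u * v =
        Ψ (x : TruncMvPoly p k n) * (Ψ (y : TruncMvPoly p k n) - v) +
          (Ψ (x : TruncMvPoly p k n) - u) * v := by ring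
    rw [hsplit]
    have hIx : Ψ (x : TruncMvPoly p k n) ∈ augIdeal p G ^ d := hmemF d x
    have hyv : Ψ (y : TruncMvPoly p k n) - v ∈ augIdeal p G ^ (e + 1) := hy
    have hxu : Ψ (x : TruncMvPoly p k n) - u ∈ augIdeal p G ^ (d + 1) := hx
    have hv' : v ∈ augIdeal p G ^ e := hv
    show _ ∈ augIdeal p G ^ (d + e + 1)
    refine Ideal.add_mem _ ?_ ?_
    · have h := Ideal.mul_mem_mul hIx hyv
      rw [← pow_add] at h
      exact h
    · have h := Ideal.mul_mem_mul hxu hv'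
      rw [← pow_add] at h
      rwa [show d + 1 + e = d + e + 1 from by omega] at h
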